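/- Let X be a second countable topological space and let Γ be a second countable, locally compact, Hausdorff topological group acting continuously on X. If (X, Γ) is k-transitive for every k ∈ ℕ, then (X, Γ) is thick strong mixing. -/

import Mathlib

open Pointwise

/-- A subset `N` of a group `G` is thick if for every finite subset `F ⊆ G`,
`N ∩ ⋂_{γ ∈ F} γN ≠ ∅`. -/
def IsThick {G : Type*} [Group G] (N : Set G) : Prop :=
  ∀ F : Finset G, (N ∩ ⋂ γ ∈ F, γ • N).Nonempty

/-- `N(A, B) = {γ ∈ G : γA ∩ B ≠ ∅}`. -/
def NSet (G : Type*) {X : Type*} [Group G] [MulAction G X] (A B : Set X) : Set G :=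
  {γ : G | ((γ • A) ∩ B).Nonempty}

/-- The system `(X, G)` is `k`-transitive: for all nonempty open sets
`U₁, …, U_k, V₁, …, V_k ⊆ X` there is `γ ∈ G` with `γUᵢ ∩ Vᵢ ≠ ∅` for all `i`. -/
def IsKTrans (G : Type*) (X : Type*) [Group G] [TopologicalSpace X] [MulAction G X]
    (k : ℕ) : Prop :=
  ∀ U V : Fin k → Set X, (∀ i, IsOpen (U i)) → (∀ i, (U i).Nonempty) →
    (∀ i, IsOpen (V i)) → (∀ i, (V i).Nonempty) →
    ∃ γ : G, ∀ i, ((γ • U i) ∩ V i).Nonempty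

/-- The system `(X, G)` is thick strong mixing: there is a thick `N ⊆ G` such that for every
pair of nonempty open `U, V ⊆ X` there is a compact `F ⊆ N` with `γU ∩ V ≠ ∅` for all
`γ ∈ N \ F`. -/
def ThickStrongMixing (G : Type*) (X : Type*) [Group G] [TopologicalSpace G]
    [TopologicalSpace X] [MulAction G X] : Prop :=
  ∃ N : Set G, IsThick N ∧
    ∀ U V : Set X, IsOpen U → U.Nonempty → IsOpen V → V.Nonempty →
      ∃ F : Set G, IsCompact F ∧ F ⊆ N ∧ ∀ γ ∈ N \ F, ((γ • U) ∩ V).Nonempty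

/-- The system `(X, G)` is weak mixing: for all nonempty open `U₁, U₂, V₁, V₂ ⊆ X`
there is `γ ∈ G` with `γU₁ ∩ V₁ ≠ ∅` and `γU₂ ∩ V₂ ≠ ∅`. -/
def WeakMixing (G : Type*) (X : Type*) [Group G] [TopologicalSpace X] [MulAction G X] :
    Prop :=
  ∀ U₁ U₂ V₁ V₂ : Set X, IsOpen U₁ → U₁.Nonempty → IsOpen U₂ → U₂.Nonempty →
    IsOpen V₁ → V₁.Nonempty → IsOpen V₂ → V₂.Nonempty →
    ∃ γ : G, ((γ • U₁) ∩ V₁).Nonempty ∧ ((γ • U₂) ∩ V₂).Nonempty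


/-- For `X` second countable and `Γ` a second countable, locally compact, Hausdorff
topological group acting continuously on `X`: if `(X, Γ)` is `k`-transitive for every `k`,
then `(X, Γ)` is thick strong mixing. -/
lemma lemA {X Γ : Type*} [TopologicalSpace X] [Group Γ] [TopologicalSpace Γ]
    [IsTopologicalGroup Γ] [MulAction Γ X] [ContinuousSMul Γ X]
    (h : ∀ k : ℕ, IsKTrans Γ X k) {K : Set Γ} (hK : IsCompact K)
    (n : ℕ) (U V : Fin n → Set X) (hUo : ∀ m, IsOpen (U m)) (hUne : ∀ m, (U m).Nonempty)
    (hVo : ∀ m, IsOpen (V m)) (hVne : ∀ m, (V m).Nonempty) :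
    ∃ x : Γ, ∀ m, ∀ g ∈ K, ((x • U m) ∩ (g • V m)).Nonempty := by
  have key : ∀ m, ∃ (Q : Set Γ) (V' : Set X), IsOpen Q ∧ (1:Γ) ∈ Q ∧ IsOpen V' ∧
      V'.Nonempty ∧ ∀ q ∈ Q, ∀ y ∈ V', q • y ∈ V m := by
    intro m
    obtain ⟨v, hv⟩ := hVne m
    have hop : IsOpen ((fun p : Γ × X => p.1 • p.2) ⁻¹' V m) :=
      (hVo m).preimage continuous_smul
    have hmem : ((1:Γ), v) ∈ ((fun p : Γ × X => p.1 • p.2) ⁻¹' V m) := by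
      simpa using hv
    rw [isOpen_prod_iff] at hop
    obtain ⟨Q, V', hQ, hV', h1, hvV', hsub⟩ := hop 1 v hmem
    exact ⟨Q, V', hQ, h1, hV', ⟨v, hvV'⟩,
      fun q hq y hy => hsub (Set.mk_mem_prod hq hy)⟩
  choose Q V' hQo hQ1 hV'o hV'ne hQV using key
  have cover : ∀ m, ∃ t : Finset Γ, K ⊆ ⋃ g ∈ t, g • (Q m)⁻¹ := by
    intro m
    apply hK.elim_finite_subcover (fun g : Γ => g • (Q m)⁻¹)
      (fun g => ((hQo m).inv).smul g)
    intro z hz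
    refine Set.mem_iUnion.2 ⟨z, Set.mem_smul_set.2 ⟨1, ?_, mul_one z⟩⟩
    simpa [Set.mem_inv] using hQ1 m
  choose t ht using cover
  set ι := Σ m : Fin n, {g : Γ // g ∈ t m}
  let eqv : ι ≃ Fin (Fintype.card ι) := Fintype.equivFin ι
  obtain ⟨x, hx⟩ := h (Fintype.card ι)
    (fun i => U (eqv.symm i).1)
    (fun i => ((eqv.symm i).2 : Γ) • V' (eqv.symm i).1)
    (fun i => hUo _) (fun i => hUne _)
    (fun i => (hV'o _).smul _) (fun i => (hV'ne _).smul_set)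
  refine ⟨x, fun m g hg => ?_⟩
  obtain ⟨g', hg'⟩ := Set.mem_iUnion.1 (ht m hg)
  obtain ⟨hg't, hmem⟩ := Set.mem_iUnion.1 hg'
  obtain ⟨q, hq, hgq⟩ := Set.mem_smul_set.1 hmem
  have := hx (eqv ⟨m, ⟨g', hg't⟩⟩)
  rw [Equiv.symm_apply_apply] at this
  obtain ⟨y, hyU, hyV⟩ := this
  obtain ⟨v', hv', hgv'⟩ := Set.mem_smul_set.1 hyV
  refine ⟨y, hyU, Set.mem_smul_set_iff_inv_smul_mem.2 ?_⟩
  have hq' : q⁻¹ ∈ Q m := by simpa [Set.mem_inv] using hq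
  have : g⁻¹ • y = q⁻¹ • v' := by
    rw [← hgv', ← hgq]
    simp [mul_smul]
  rw [this]
  exact hQV m _ hq' _ hv'

theorem kTrans_implies_thickStrongMixing {X Γ : Type*} [TopologicalSpace X]
    [SecondCountableTopology X] [Group Γ] [TopologicalSpace Γ] [IsTopologicalGroup Γ]
    [T2Space Γ] [SecondCountableTopology Γ] [LocallyCompactSpace Γ]
    [MulAction Γ X] [ContinuousSMul Γ X]
    (h : ∀ k : ℕ, IsKTrans Γ X k) :
    ThickStrongMixing Γ X := by
  rcases isEmpty_or_nonempty X with hX | hX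
  · refine ⟨Set.univ, fun F => ⟨1, trivial, ?_⟩, fun U V _ hUne _ _ => ?_⟩
    · simp [Set.smul_set_univ]
    · obtain ⟨u, -⟩ := hUne
      exact (IsEmpty.false u).elim
  · obtain ⟨B, hBc, hBne, hBb⟩ := TopologicalSpace.exists_countable_basis X
    have hSne : (B ×ˢ B).Nonempty := by
      obtain ⟨z⟩ := hX
      obtain ⟨b, hb, -, -⟩ := hBb.exists_subset_of_mem_open (Set.mem_univ z) isOpen_univ
      exact ⟨(b, b), hb, hb⟩
    obtain ⟨e, he⟩ := (hBc.prod hBc).exists_eq_range hSne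
    have heB : ∀ m : ℕ, (e m).1 ∈ B ∧ (e m).2 ∈ B := by
      intro m
      have : e m ∈ B ×ˢ B := he ▸ Set.mem_range_self m
      exact ⟨this.1, this.2⟩
    have hne : ∀ b ∈ B, Set.Nonempty b := fun b hb =>
      Set.nonempty_iff_ne_empty.2 (fun hbe => hBne (hbe ▸ hb))
    have hx : ∀ n : ℕ, ∃ x : Γ, ∀ m : Fin (n+1),
        ∀ g ∈ insert (1:Γ) (compactCovering Γ n),
        ((x • (e m.val).1) ∩ (g • (e m.val).2)).Nonempty := by
      intro n
      exact lemA h ((isCompact_compactCovering Γ n).insert 1) (n+1)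
        (fun m => (e m.val).1) (fun m => (e m.val).2)
        (fun m => hBb.isOpen (heB m.val).1) (fun m => hne _ (heB m.val).1)
        (fun m => hBb.isOpen (heB m.val).2) (fun m => hne _ (heB m.val).2)
    choose x hx using hx
    set piece : ℕ → Set Γ :=
      fun n => (fun g => g⁻¹ * x n) '' insert 1 (compactCovering Γ n) with hpiece
    have hpc : ∀ n, IsCompact (piece n) := fun n =>
      (((isCompact_compactCovering Γ n).insert 1)).image (by fun_prop)
    have hxp : ∀ n, x n ∈ piece n := fun n => ⟨1, Set.mem_insert _ _, by simp⟩
    refine ⟨⋃ n, piece n, ?_, ?_⟩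
    · intro F
      choose f hf using fun γ : Γ => exists_mem_compactCovering (X := Γ) γ
      set n := F.sup f with hn
      refine ⟨x n, Set.mem_iUnion.2 ⟨n, hxp n⟩, Set.mem_iInter₂.2 fun γ hγ => ?_⟩
      have hmem : γ⁻¹ * x n ∈ piece n :=
        ⟨γ, Set.mem_insert_of_mem _ (compactCovering_subset Γ (Finset.le_sup hγ) (hf γ)), rfl⟩
      exact Set.mem_smul_set_iff_inv_smul_mem.2 (Set.mem_iUnion.2 ⟨n, hmem⟩)
    · intro U V hUo hUne hVo hVne
      obtain ⟨u, hu⟩ := hUne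
      obtain ⟨bU, hbU, huU, hUsub⟩ := hBb.exists_subset_of_mem_open hu hUo
      obtain ⟨v, hv⟩ := hVne
      obtain ⟨bV, hbV, hvV, hVsub⟩ := hBb.exists_subset_of_mem_open hv hVo
      have hmemS : (bU, bV) ∈ B ×ˢ B := ⟨hbU, hbV⟩
      rw [he] at hmemS
      obtain ⟨m₀, hm₀⟩ := hmemS
      refine ⟨⋃ n ∈ Finset.range m₀, piece n,
        (Finset.range m₀).isCompact_biUnion (fun n _ => hpc n),
        Set.iUnion₂_subset fun n _ => Set.subset_iUnion piece n, ?_⟩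
      rintro γ ⟨hγN, hγF⟩
      obtain ⟨n, hγn⟩ := Set.mem_iUnion.1 hγN
      have hn : m₀ ≤ n := by
        by_contra hlt
        exact hγF (Set.mem_biUnion (Finset.mem_range.2 (Nat.lt_of_not_le hlt)) hγn)
      obtain ⟨g, hg, hgγ⟩ := hγn
      have hkey := hx n ⟨m₀, Nat.lt_succ_of_le hn⟩ g hg
      rw [hm₀] at hkey
      obtain ⟨y, hyU, hyV⟩ := hkey
      obtain ⟨u', hu', hxu'⟩ := Set.mem_smul_set.1 hyU
      obtain ⟨v', hv', hgv'⟩ := Set.mem_smul_set.1 hyV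
      refine ⟨γ • u', Set.smul_mem_smul_set (hUsub hu'), hVsub ?_⟩
      have : γ • u' = v' := by
        rw [← hgγ, mul_smul, hxu', ← hgv']
        simp
      rw [this]
      exact hv'
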